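/- Let U ⊆ ℂ be open with x·(x²+11x−1) ≠ 0 for all x ∈ U. Let Ψ : ℂ → ℂ be twice differentiable on U and satisfy x(x²+11x−1)·Ψ''(x) + (3x²+22x−1)·Ψ'(x) + (x+3)·Ψ(x) = 0 for all x ∈ U, and let g : ℂ → ℂ be twice differentiable on U with g(x)² = x(x²+11x−1) for all x ∈ U. Then ψ := g·Ψ solves ψ'' = Q₄·ψ on U, where Q₄(x) := −(1/4)·(x⁴+12x³+134x²−12x+1)/(x²(x²+11x−1)²). -/

import Mathlib

open Complex

/-- `f` solves the equation `ψ'' = Q·ψ` on the open set `U`. -/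
def SolvesOn (Q f : ℂ → ℂ) (U : Set ℂ) : Prop :=
  (∀ x ∈ U, DifferentiableAt ℂ f x) ∧ (∀ x ∈ U, DifferentiableAt ℂ (deriv f) x) ∧
    ∀ x ∈ U, deriv (deriv f) x = Q x * f x

theorem chudnovsky_four_normal_form
    (U : Set ℂ) (hU : IsOpen U)
    (hUne : ∀ x ∈ U, x * (x ^ 2 + 11 * x - 1) ≠ 0)
    (Ψ g : ℂ → ℂ)
    (hΨ1 : ∀ x ∈ U, DifferentiableAt ℂ Ψ x)
    (hΨ2 : ∀ x ∈ U, DifferentiableAt ℂ (deriv Ψ) x)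
    (hode : ∀ x ∈ U, x * (x ^ 2 + 11 * x - 1) * deriv (deriv Ψ) x
      + (3 * x ^ 2 + 22 * x - 1) * deriv Ψ x + (x + 3) * Ψ x = 0)
    (hg1 : ∀ x ∈ U, DifferentiableAt ℂ g x)
    (hg2 : ∀ x ∈ U, DifferentiableAt ℂ (deriv g) x)
    (hgsq : ∀ x ∈ U, g x ^ 2 = x * (x ^ 2 + 11 * x - 1)) :
    SolvesOn (fun x => -(1 / 4) * (x ^ 4 + 12 * x ^ 3 + 134 * x ^ 2 - 12 * x + 1)
        / (x ^ 2 * (x ^ 2 + 11 * x - 1) ^ 2))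
      (fun x => g x * Ψ x) U := by
  -- first derivative of ψ on U
  have hψd : ∀ y ∈ U, deriv (fun x => g x * Ψ x) y = deriv g y * Ψ y + g y * deriv Ψ y := by
    intro y hy
    exact deriv_mul (hg1 y hy) (hΨ1 y hy)
  have hψ1 : ∀ x ∈ U, DifferentiableAt ℂ (fun x => g x * Ψ x) x := fun x hx =>
    (hg1 x hx).mul (hΨ1 x hx)
  -- the first derivative agrees near any point of U with the explicit formula
  have hψdev : ∀ x ∈ U, deriv (fun x => g x * Ψ x) =ᶠ[nhds x]
      (fun y => deriv g y * Ψ y + g y * deriv Ψ y) := by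
    intro x hx
    exact Filter.eventually_of_mem (hU.mem_nhds hx) hψd
  have hrhs : ∀ x ∈ U, DifferentiableAt ℂ (fun y => deriv g y * Ψ y + g y * deriv Ψ y) x := by
    intro x hx
    exact ((hg2 x hx).mul (hΨ1 x hx)).add ((hg1 x hx).mul (hΨ2 x hx))
  have hψ2 : ∀ x ∈ U, DifferentiableAt ℂ (deriv (fun x => g x * Ψ x)) x := by
    intro x hx
    exact ((hψdev x hx).differentiableAt_iff).mpr (hrhs x hx)
  refine ⟨hψ1, hψ2, ?_⟩
  intro x hx
  -- second derivative formula
  have hdd : deriv (deriv (fun x => g x * Ψ x)) x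
      = deriv (deriv g) x * Ψ x + deriv g x * deriv Ψ x
        + (deriv g x * deriv Ψ x + g x * deriv (deriv Ψ) x) := by
    rw [(hψdev x hx).deriv_eq]
    rw [deriv_fun_add (f := fun y => deriv g y * Ψ y) (g := fun y => g y * deriv Ψ y)
        ((hg2 x hx).mul (hΨ1 x hx)) ((hg1 x hx).mul (hΨ2 x hx)),
      deriv_fun_mul (hg2 x hx) (hΨ1 x hx), deriv_fun_mul (hg1 x hx) (hΨ2 x hx)]
  -- derivative of the polynomial p
  have hp : ∀ y : ℂ, HasDerivAt (fun z : ℂ => z * (z ^ 2 + 11 * z - 1))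
      (3 * y ^ 2 + 22 * y - 1) y := by
    intro y
    have h1 : HasDerivAt (fun z : ℂ => z * (z ^ 2 + 11 * z - 1))
        (1 * (y ^ 2 + 11 * y - 1) + y * (2 * y ^ 1 + 11 * 1)) y :=
      (hasDerivAt_id y).mul (((hasDerivAt_pow 2 y).add
        ((hasDerivAt_id y).const_mul 11)).sub_const 1)
    convert h1 using 1
    ring
  -- 2 g g' = p' on U
  have hgg : ∀ y ∈ U, 2 * (g y * deriv g y) = 3 * y ^ 2 + 22 * y - 1 := by
    intro y hy
    have hev : (fun z => g z ^ 2) =ᶠ[nhds y] (fun z : ℂ => z * (z ^ 2 + 11 * z - 1)) :=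
      Filter.eventually_of_mem (hU.mem_nhds hy) hgsq
    have h1 : deriv (fun z => g z ^ 2) y = 3 * y ^ 2 + 22 * y - 1 := by
      rw [hev.deriv_eq]; exact (hp y).deriv
    have h2 : HasDerivAt (fun z => g z ^ 2) (2 * g y ^ 1 * deriv g y) y := by
      simpa using ((hg1 y hy).hasDerivAt.fun_pow 2)
    rw [← h1, h2.deriv]; ring
  -- differentiate again: 2 (g'^2 + g g'') = 6x + 22
  have hgg2 : 2 * (deriv g x * deriv g x + g x * deriv (deriv g) x) = 6 * x + 22 := by
    have hev : (fun y => 2 * (g y * deriv g y)) =ᶠ[nhds x]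
        (fun y : ℂ => 3 * y ^ 2 + 22 * y - 1) :=
      Filter.eventually_of_mem (hU.mem_nhds hx) hgg
    have h1 : HasDerivAt (fun y : ℂ => 3 * y ^ 2 + 22 * y - 1) (6 * x + 22) x := by
      have := (((hasDerivAt_pow 2 x).const_mul 3).add
        ((hasDerivAt_id x).const_mul 22)).sub_const 1
      refine this.congr_deriv ?_
      norm_num; ring
    have h2 : HasDerivAt (fun y => 2 * (g y * deriv g y))
        (2 * (deriv g x * deriv g x + g x * deriv (deriv g) x)) x :=
      (((hg1 x hx).hasDerivAt.mul (hg2 x hx).hasDerivAt)).const_mul 2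
    have := hev.deriv_eq
    rw [h2.deriv, h1.deriv] at this
    exact this
  have hmul := hUne x hx
  have hx0 : x ≠ 0 := fun h => hmul (by simp [h])
  have hq0 : x ^ 2 + 11 * x - 1 ≠ 0 := fun h => hmul (by simp [h])
  have hg0 : g x ≠ 0 := by
    intro h
    apply hmul
    rw [← hgsq x hx, h]; ring
  -- the key algebraic identity
  have hODE := hode x hx
  have hsq := hgsq x hx
  have hGG := hgg x hx
  rw [hdd]
  simp only
  apply mul_left_cancel₀ hg0
  have hD : x ^ 2 * (x ^ 2 + 11 * x - 1) ^ 2 ≠ 0 := mul_ne_zero (pow_ne_zero 2 hx0) (pow_ne_zero 2 hq0)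
  rw [div_mul_eq_mul_div, mul_div_assoc', eq_div_iff hD, ← mul_right_inj' (show (4 : ℂ) ≠ 0 by norm_num)]
  linear_combination
    (2 * (x * (x ^ 2 + 11 * x - 1)) ^ 2 * Ψ x) * hgg2
    + (4 * (x * (x ^ 2 + 11 * x - 1)) ^ 2 * deriv Ψ x
        - (x * (x ^ 2 + 11 * x - 1)) * Ψ x
          * (2 * (g x * deriv g x) + (3 * x ^ 2 + 22 * x - 1))) * hGG
    + (4 * (x * (x ^ 2 + 11 * x - 1)) ^ 2 * deriv (deriv Ψ) x
        + (x ^ 4 + 12 * x ^ 3 + 134 * x ^ 2 - 12 * x + 1) * Ψ x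
        + 4 * (x * (x ^ 2 + 11 * x - 1)) * Ψ x * deriv g x ^ 2) * hsq
    + (4 * (x * (x ^ 2 + 11 * x - 1)) ^ 2) * hODE
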